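/- Let G be a finite graph with a regular rooted tree decomposition (T,bag), let q,k ∈ ℕ, let s,t ∈ V(G) and S ⊆ V(G) with |S| ≤ k, and set Ŝ = S ∪ {s,t}. Let x be a node of T such that bag(x) is (q,k)-unbreakable in G. Let Z be the set of children z of x with comp(z) ∩ Ŝ ≠ ∅, and suppose that for each z ∈ Z a semi-correct profile Π_z at z is given. Let bgraph' be the graph obtained from the induced subgraph G[bag(x)] by adding the following edges: for each z ∈ Z, an edge between the two elements of every pair in Π_z both of whose elements lie in bag(x); and for each child w of x with w ∉ Z, an edge between every pair of distinct vertices of adh(w). Then for every pair of distinct vertices a,b ∈ bag(x): (i) if a and b are connected in bgraph' − S, then a and b are connected in G − S; and (ii) if there exist sets A,B ⊆ bag(x), each of size q+1 and disjoint from S, with a ∈ A and b ∈ B, such that the induced subgraphs bgraph'[A] and bgraph'[B] are connected, then a and b are connected in G − S. -/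

import Mathlib

/-- A finite rooted tree, encoded by its parent function. -/
structure RTree (ι : Type*) where
  root : ι
  parent : ι → ι
  parent_root : parent root = root
  reaches_root : ∀ x : ι, ∃ n : ℕ, parent^[n] x = root

namespace RTree

variable {ι : Type*} (T : RTree ι)

/-- `T.Anc x y` means `x` is an ancestor of `y` (every node is its own ancestor). -/
def Anc (x y : ι) : Prop := ∃ n : ℕ, T.parent^[n] y = x

/-- `T.IsChild y x` means `y` is a child of `x`. -/
def IsChild (y x : ι) : Prop := y ≠ T.root ∧ T.parent y = x

/-- The underlying undirected graph of the rooted tree. -/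
def treeGraph : SimpleGraph ι where
  Adj x y := x ≠ y ∧ (T.IsChild x y ∨ T.IsChild y x)
  symm := ⟨fun x y h => ⟨h.1.symm, h.2.symm⟩⟩
  loopless := ⟨fun x h => h.1 rfl⟩

end RTree

/-- Two vertices are connected by a walk all of whose vertices lie in `U`. -/
def ConnIn {V : Type*} (G : SimpleGraph V) (U : Set V) (a b : V) : Prop :=
  ∃ p : G.Walk a b, ∀ w ∈ p.support, w ∈ U

theorem ConnIn.symm {V : Type*} {G : SimpleGraph V} {U : Set V} {a b : V}
    (h : ConnIn G U a b) : ConnIn G U b a := by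
  obtain ⟨p, hp⟩ := h
  refine ⟨p.reverse, fun w hw => hp w ?_⟩
  rwa [SimpleGraph.Walk.support_reverse, List.mem_reverse] at hw

/-- `X` is `(q,k)`-unbreakable in the induced subgraph `G[U]`: for every separation `(A,B)`
of `G[U]` of order at most `k`, one of the two sides contains at most `q` vertices of `X`. -/
def UnbreakableIn {V : Type*} (G : SimpleGraph V) (U X : Set V) (q k : ℕ) : Prop :=
  ∀ A B : Set V, A ⊆ U → B ⊆ U → A ∪ B = U →
    (∀ a ∈ A \ B, ∀ b ∈ B \ A, ¬ G.Adj a b) →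
    (A ∩ B).ncard ≤ k →
    (A ∩ X).ncard ≤ q ∨ (B ∩ X).ncard ≤ q

/-- A rooted tree decomposition of the graph `G`, with nodes indexed by `ι`. -/
structure TreeDecomp {V : Type*} (G : SimpleGraph V) (ι : Type*) extends RTree ι where
  bag : ι → Set V
  /-- (T1) for every vertex, the set of nodes whose bag contains it
  is a nonempty subtree of the tree. -/
  bag_subtree : ∀ u : V, ((toRTree.treeGraph).induce {x : ι | u ∈ bag x}).Connected
  /-- (T2) every edge is contained in some bag. -/
  bag_edge : ∀ u v : V, G.Adj u v → ∃ x : ι, u ∈ bag x ∧ v ∈ bag x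

namespace TreeDecomp

variable {V ι : Type*} {G : SimpleGraph V} (D : TreeDecomp G ι)

/-- The adhesion of a node: intersection of its bag with the bag of its parent
(empty at the root). -/
def adh (x : ι) : Set V :=
  {v : V | x ≠ D.root ∧ v ∈ D.bag (D.parent x) ∧ v ∈ D.bag x}

/-- The margin of a node. -/
def mrg (x : ι) : Set V := D.bag x \ D.adh x

/-- The cone at a node: union of the bags at all its descendants. -/
def cone (x : ι) : Set V := {v : V | ∃ y : ι, D.toRTree.Anc x y ∧ v ∈ D.bag y}

/-- The component at a node. -/
def comp (x : ι) : Set V := D.cone x \ D.adh x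

/-- A tree decomposition is regular if every non-root node has nonempty margin,
connected component, and every adhesion vertex has a neighbour in the component. -/
def Regular : Prop :=
  ∀ x : ι, x ≠ D.root →
    (D.mrg x).Nonempty ∧
    (G.induce (D.comp x)).Connected ∧
    ∀ u ∈ D.adh x, ∃ w ∈ D.comp x, G.Adj u w

end TreeDecomp

/-- Adjacency in the torso of `X` in the induced subgraph `G[U]`:
`a, b ∈ X` are adjacent iff `G[U]` contains an `a`–`b` path whose internal vertices
all avoid `X`. -/
def TorsoAdj {V : Type*} (G : SimpleGraph V) (U X : Set V) (a b : V) : Prop :=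
  a ≠ b ∧ a ∈ X ∧ b ∈ X ∧
    ∃ p : G.Walk a b, (∀ w ∈ p.support, w ∈ U) ∧
      (∀ w ∈ p.support, w ≠ a → w ≠ b → w ∉ X)

namespace TreeDecomp

variable {V ι : Type*} {G : SimpleGraph V} (D : TreeDecomp G ι)

/-- `D(x) = adh(x) ∪ ({s,t} ∩ cone(x))`. -/
def Dset (s t : V) (x : ι) : Set V := D.adh x ∪ ({s, t} ∩ D.cone x)

end TreeDecomp

namespace TreeDecomp

variable {V ι : Type*} {G : SimpleGraph V} (D : TreeDecomp G ι)

/-- A semi-correct profile at `x` (with respect to `s`, `t` and the failed set `S`):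
a set of unordered pairs of distinct elements of `D(x)` containing every pair connected
by an `S`-avoiding path in `G[cone(x)]`, all of whose pairs are connected by an
`S`-avoiding path in `G`. -/
def SemiCorrectProfile (s t : V) (S : Set V) (x : ι) (P : Set (Sym2 V)) : Prop :=
  (∀ a b : V, s(a, b) ∈ P → a ≠ b ∧ a ∈ D.Dset s t x ∧ b ∈ D.Dset s t x) ∧
  (∀ a b : V, a ≠ b → a ∈ D.Dset s t x → b ∈ D.Dset s t x →
      ConnIn G (D.cone x \ S) a b → s(a, b) ∈ P) ∧
  (∀ a b : V, s(a, b) ∈ P → ConnIn G Sᶜ a b)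

end TreeDecomp

theorem ConnIn.mono {V : Type*} {G : SimpleGraph V} {U U' : Set V} {a b : V}
    (h : ConnIn G U a b) (hU : U ⊆ U') : ConnIn G U' a b := by
  obtain ⟨p, hp⟩ := h
  exact ⟨p, fun w hw => hU (hp w hw)⟩

theorem ConnIn.trans {V : Type*} {G : SimpleGraph V} {U : Set V} {a b c : V}
    (h1 : ConnIn G U a b) (h2 : ConnIn G U b c) : ConnIn G U a c := by
  obtain ⟨p, hp⟩ := h1
  obtain ⟨q, hq⟩ := h2
  refine ⟨p.append q, fun w hw => ?_⟩
  rw [SimpleGraph.Walk.mem_support_append_iff] at hw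
  exact hw.elim (hp w) (hq w)

theorem connIn_of_adj {V : Type*} {G : SimpleGraph V} {U : Set V} {a b : V}
    (h : G.Adj a b) (haU : a ∈ U) (hbU : b ∈ U) : ConnIn G U a b := by
  refine ⟨SimpleGraph.Walk.cons h SimpleGraph.Walk.nil, fun w hw => ?_⟩
  simp only [SimpleGraph.Walk.support_cons, SimpleGraph.Walk.support_nil,
    List.mem_cons, List.mem_singleton] at hw
  rcases hw with rfl | hw
  · exact haU
  · simp at hw; subst hw; exact hbU

theorem connIn_refl {V : Type*} {G : SimpleGraph V} {U : Set V} {a : V}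
    (h : a ∈ U) : ConnIn G U a a := by
  refine ⟨SimpleGraph.Walk.nil, fun w hw => ?_⟩
  simp only [SimpleGraph.Walk.support_nil, List.mem_singleton] at hw
  subst hw; exact h

theorem connIn_of_induce_connected {V : Type*} {G : SimpleGraph V} {U : Set V} {a b : V}
    (h : (G.induce U).Connected) (haU : a ∈ U) (hbU : b ∈ U) : ConnIn G U a b := by
  obtain ⟨p⟩ := h ⟨a, haU⟩ ⟨b, hbU⟩
  let f : G.induce U →g G := ⟨Subtype.val, fun {x y} h => h⟩
  refine ⟨p.map f, fun w hw => ?_⟩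
  rw [SimpleGraph.Walk.support_map, List.mem_map] at hw
  obtain ⟨⟨y, hy⟩, _, rfl⟩ := hw
  exact hy

theorem connIn_lift {V : Type*} {G Bg : SimpleGraph V} {S : Set V}
    (hedge : ∀ u v : V, Bg.Adj u v → u ∉ S → v ∉ S → ConnIn G Sᶜ u v) :
    ∀ {a b : V} (p : Bg.Walk a b), (∀ w ∈ p.support, w ∈ Sᶜ) → ConnIn G Sᶜ a b := by
  intro a b p
  induction p with
  | nil => intro h; exact connIn_refl (h _ (by simp))
  | cons h p ih =>
    intro hs
    have hu := hs _ (SimpleGraph.Walk.start_mem_support _)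
    have hrest : ∀ w ∈ p.support, w ∈ Sᶜ := fun z hz =>
      hs z (by rw [SimpleGraph.Walk.support_cons]; exact List.mem_cons_of_mem _ hz)
    have hv := hrest _ (SimpleGraph.Walk.start_mem_support p)
    exact (hedge _ _ h hu hv).trans (ih hrest)

/-- Let `bag(x)` be `(q,k)`-unbreakable in `G`, let `Z` be the set of
affected children of `x` (those whose component meets `Ŝ = S ∪ {s,t}`), with a
semi-correct profile `P z` for each `z ∈ Z`, and let `bgraph'` be obtained from
`G[bag(x)]` by adding the pairs of each `P z` lying inside `bag(x)` as edges, and turning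
`adh(w)` into a clique for every unaffected child `w`. Then for distinct
`a, b ∈ bag(x)`: (i) if `a` and `b` are connected in `bgraph' − S` then they are
connected in `G − S`; and (ii) if there are `(q+1)`-element sets `A ∋ a` and `B ∋ b`
inside `bag(x)`, disjoint from `S`, with `bgraph'[A]` and `bgraph'[B]` connected, then
`a` and `b` are connected in `G − S`. -/
theorem stmt15 {V ι : Type*} [Fintype V] [Fintype ι] {G : SimpleGraph V}
    (D : TreeDecomp G ι) (hreg : D.Regular) (q k : ℕ)
    (s t : V) (S : Set V) (hSk : S.ncard ≤ k)
    (x : ι) (hunb : UnbreakableIn G Set.univ (D.bag x) q k)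
    (Z : Set ι) (hZ : Z = {z : ι | D.toRTree.IsChild z x ∧ (D.comp z ∩ (S ∪ {s, t})).Nonempty})
    (P : ι → Set (Sym2 V)) (hP : ∀ z ∈ Z, D.SemiCorrectProfile s t S z (P z))
    (Bg : SimpleGraph V)
    (hBg : ∀ a b : V, Bg.Adj a b ↔ a ≠ b ∧ a ∈ D.bag x ∧ b ∈ D.bag x ∧
        (G.Adj a b ∨ (∃ z ∈ Z, s(a, b) ∈ P z) ∨
          (∃ w : ι, D.toRTree.IsChild w x ∧ w ∉ Z ∧ a ∈ D.adh w ∧ b ∈ D.adh w)))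
    (a b : V) (ha : a ∈ D.bag x) (hb : b ∈ D.bag x) (hab : a ≠ b) :
    (ConnIn Bg Sᶜ a b → ConnIn G Sᶜ a b) ∧
    ((∃ A B : Set V, A ⊆ D.bag x ∧ B ⊆ D.bag x ∧
        A.ncard = q + 1 ∧ B.ncard = q + 1 ∧ Disjoint A S ∧ Disjoint B S ∧
        a ∈ A ∧ b ∈ B ∧ (Bg.induce A).Connected ∧ (Bg.induce B).Connected) →
      ConnIn G Sᶜ a b) := by
  have hedge : ∀ u v : V, Bg.Adj u v → u ∉ S → v ∉ S → ConnIn G Sᶜ u v := by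
    intro u v huv hu hv
    rw [hBg] at huv
    obtain ⟨hne, _, _, hcase⟩ := huv
    rcases hcase with hadj | ⟨z, hz', hpz⟩ | ⟨w, hwchild, hwZ, hua, hva⟩
    · exact connIn_of_adj hadj hu hv
    · exact (hP z hz').2.2 u v hpz
    · have hcompS : D.comp w ∩ (S ∪ {s, t}) = ∅ := by
        by_contra hne'
        exact hwZ (hZ ▸ ⟨hwchild, Set.nonempty_iff_ne_empty.mpr hne'⟩)
      have hcomp_sub : D.comp w ⊆ Sᶜ := fun y hy hyS =>
        (Set.eq_empty_iff_forall_notMem.mp hcompS y) ⟨hy, Or.inl hyS⟩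
      obtain ⟨_, hconn, hnbr⟩ := hreg w hwchild.1
      obtain ⟨u', hu'c, hadju⟩ := hnbr u hua
      obtain ⟨v', hv'c, hadjv⟩ := hnbr v hva
      have h1 : ConnIn G Sᶜ u u' := connIn_of_adj hadju hu (hcomp_sub hu'c)
      have h2 : ConnIn G Sᶜ u' v' :=
        (connIn_of_induce_connected hconn hu'c hv'c).mono hcomp_sub
      have h3 : ConnIn G Sᶜ v' v := connIn_of_adj hadjv.symm (hcomp_sub hv'c) hv
      exact h1.trans (h2.trans h3)
  constructor
  · rintro ⟨p, hp⟩
    exact connIn_lift hedge p hp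
  · rintro ⟨A, B, hAx, hBx, hAcard, hBcard, hAS, hBS, haA, hbB, hAconn, hBconn⟩
    by_contra hcon
    set C : Set V := {v | ConnIn G Sᶜ a v} with hCdef
    have hCS : C ⊆ Sᶜ := by
      rintro v ⟨p, hp⟩
      exact hp v p.end_mem_support
    have hAsub : A ⊆ Sᶜ := fun y hy => Set.disjoint_left.mp hAS hy
    have hBsub : B ⊆ Sᶜ := fun y hy => Set.disjoint_left.mp hBS hy
    have hAC : A ⊆ C := by
      intro v hv
      have h1 : ConnIn Bg A a v := connIn_of_induce_connected hAconn haA hv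
      obtain ⟨p, hp⟩ := h1.mono hAsub
      exact connIn_lift hedge p hp
    have hBb : ∀ v ∈ B, ConnIn G Sᶜ b v := by
      intro v hv
      have h1 : ConnIn Bg B b v := connIn_of_induce_connected hBconn hbB hv
      obtain ⟨p, hp⟩ := h1.mono hBsub
      exact connIn_lift hedge p hp
    have hBC : ∀ v ∈ B, v ∉ C := fun v hv hvC => hcon (hvC.trans (hBb v hv).symm)
    have hsep : ∀ u ∈ (C ∪ S) \ (Cᶜ ∪ S), ∀ v ∈ (Cᶜ ∪ S) \ (C ∪ S), ¬ G.Adj u v := by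
      rintro u ⟨hu1, hu2⟩ v ⟨hv1, hv2⟩ hadj
      have huC : u ∈ C := by
        rcases hu1 with h | h
        · exact h
        · exact absurd (Or.inr h) hu2
      have huS : u ∉ S := fun h => hu2 (Or.inr h)
      have hvC : v ∉ C := fun h => hv2 (Or.inl h)
      have hvS : v ∉ S := fun h => hv2 (Or.inr h)
      exact hvC (huC.trans (connIn_of_adj hadj huS hvS))
    have hcap : (C ∪ S) ∩ (Cᶜ ∪ S) = S := by
      ext v
      constructor
      · rintro ⟨h1 | h1, h2 | h2⟩ <;> first | exact absurd h1 h2 | assumption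
      · intro h; exact ⟨Or.inr h, Or.inr h⟩
    rcases hunb (C ∪ S) (Cᶜ ∪ S) (Set.subset_univ _) (Set.subset_univ _)
        (by ext v; simp [em (v ∈ C)]; tauto) hsep (by rw [hcap]; exact hSk) with h | h
    · have hsub : A ⊆ (C ∪ S) ∩ D.bag x := fun v hv => ⟨Or.inl (hAC hv), hAx hv⟩
      have := Set.ncard_le_ncard hsub (Set.toFinite _)
      omega
    · have hsub : B ⊆ (Cᶜ ∪ S) ∩ D.bag x := fun v hv => ⟨Or.inl (hBC v hv), hBx hv⟩
      have := Set.ncard_le_ncard hsub (Set.toFinite _)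
      omega
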